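/- With notation as above (Λ complete DVR with residue field k, M a finitely generated Λ-module with endomorphism f annihilated by a split monic polynomial, K the fraction field of Λ), the generalized (λ)-eigenspace satisfies: (i) M_{(λ)} ⊗_Λ K is the direct sum of the generalized μ-eigenspaces of f on M ⊗_Λ K over all eigenvalues μ congruent to λ modulo the maximal ideal; (ii) M_{(λ)} ⊗_Λ k is the generalized λ̄-eigenspace of the induced endomorphism f̄ on M ⊗_Λ k. -/

import Mathlib

open IsLocalRing Polynomial

section Helpers

open TensorProduct

variable {R A M : Type*} [CommRing R] [CommRing A] [Algebra R A]
  [AddCommGroup M] [Module R M]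

lemma aux_coprime_X_sub_C {a b : R} (h : IsUnit (a - b)) :
    IsCoprime (X - C a : R[X]) (X - C b) := by
  obtain ⟨u, hu⟩ := h
  refine ⟨-C ((u⁻¹ : Rˣ) : R), C ((u⁻¹ : Rˣ) : R), ?_⟩
  have h1 : ((u⁻¹ : Rˣ) : R) * (a - b) = 1 := by rw [← hu]; exact u.inv_mul
  have h2 : -C ((u⁻¹ : Rˣ) : R) * (X - C a) + C ((u⁻¹ : Rˣ) : R) * (X - C b)
      = C ((u⁻¹ : Rˣ) : R) * (C a - C b) := by ring
  rw [h2, ← map_sub, ← map_mul, h1, map_one]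

lemma aux_modular {a b a' b' : Submodule A (A ⊗[R] M)} (ha : a ≤ a') (hb : b ≤ b')
    (hab : a ⊔ b = ⊤) (h' : Disjoint a' b') : a' = a := by
  refine le_antisymm ?_ ha
  have h3 : (a ⊔ b) ⊓ a' = a ⊔ b ⊓ a' := sup_inf_assoc_of_le b ha
  rw [hab, top_inf_eq] at h3
  rw [h3]
  have : b ⊓ a' ≤ ⊥ := le_trans (inf_le_inf_right a' hb) (by rw [inf_comm]; exact h'.le_bot)
  rw [le_bot_iff.1 this, sup_bot_eq]

lemma aux_aeval_baseChange (f : Module.End R M) (p : R[X]) :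
    aeval (LinearMap.baseChange A (f : M →ₗ[R] M) : Module.End A (A ⊗[R] M))
        (p.map (algebraMap R A))
      = LinearMap.baseChange A (aeval f p : M →ₗ[R] M) := by
  rw [aeval_map_algebraMap]
  exact (aeval_algHom_apply (Module.End.baseChangeHom R A M) f p)

lemma aux_ker_dvd (g : Module.End R M) (p v : R[X]) :
    LinearMap.ker (aeval g p) ≤ LinearMap.ker (aeval g (p * v)) := by
  intro x hx
  rw [LinearMap.mem_ker] at hx ⊢
  rw [mul_comm, map_mul, Module.End.mul_apply, hx, map_zero]

lemma aux_baseChange_ker_of_coprime (f : Module.End R M) (p q : R[X])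
    (hpq : IsCoprime p q) (h0 : aeval f (p * q) = 0) :
    Submodule.baseChange A (LinearMap.ker (aeval f p))
      = LinearMap.ker (aeval (LinearMap.baseChange A (f : M →ₗ[R] M) : Module.End A (A ⊗[R] M))
          (p.map (algebraMap R A))) := by
  have hsup : LinearMap.ker (aeval f p) ⊔ LinearMap.ker (aeval f q) = ⊤ := by
    rw [Polynomial.sup_ker_aeval_eq_ker_aeval_mul_of_coprime f hpq, h0, LinearMap.ker_zero]
  have hbase : ∀ r : R[X], Submodule.baseChange A (LinearMap.ker (aeval f r))
      ≤ LinearMap.ker (aeval (LinearMap.baseChange A (f : M →ₗ[R] M) : Module.End A (A ⊗[R] M))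
          (r.map (algebraMap R A))) := by
    intro r
    rw [aux_aeval_baseChange, Submodule.baseChange_eq_span, Submodule.span_le]
    rintro _ ⟨x, hx, rfl⟩
    simp only [SetLike.mem_coe, LinearMap.mem_ker, TensorProduct.mk_apply,
      LinearMap.baseChange_tmul]
    rw [SetLike.mem_coe, LinearMap.mem_ker] at hx
    rw [hx, tmul_zero]
  have hdisj : Disjoint
      (LinearMap.ker (aeval (LinearMap.baseChange A (f : M →ₗ[R] M) : Module.End A (A ⊗[R] M))
          (p.map (algebraMap R A))))
      (LinearMap.ker (aeval (LinearMap.baseChange A (f : M →ₗ[R] M) : Module.End A (A ⊗[R] M))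
          (q.map (algebraMap R A)))) := by
    apply Polynomial.disjoint_ker_aeval_of_isCoprime
    have := hpq.map (mapRingHom (algebraMap R A))
    simpa using this
  have hsupA : Submodule.baseChange A (LinearMap.ker (aeval f p))
      ⊔ Submodule.baseChange A (LinearMap.ker (aeval f q)) = ⊤ := by
    refine le_antisymm le_top ?_
    rw [← Submodule.baseChange_top (A := A) (M := M), ← hsup, Submodule.baseChange_eq_span,
      Submodule.span_le]
    rintro _ ⟨x, hx, rfl⟩
    obtain ⟨y, hy, z, hz, rfl⟩ := Submodule.mem_sup.1 hx
    simp only [TensorProduct.mk_apply, tmul_add, SetLike.mem_coe]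
    exact Submodule.add_mem _
      (Submodule.mem_sup_left (Submodule.tmul_mem_baseChange_of_mem 1 hy))
      (Submodule.mem_sup_right (Submodule.tmul_mem_baseChange_of_mem 1 hz))
  exact (aux_modular (hbase p) (hbase q) hsupA hdisj).symm

lemma aux_aeval_X_sub_C_pow (g : Module.End R M) (b : R) (k : ℕ) :
    aeval g ((X - C b) ^ k) = (g - b • 1) ^ k := by
  rw [map_pow]
  congr 1
  simp [Module.algebraMap_end_eq_smul_id, Module.End.one_eq_id]

lemma aux_maxGen_eq_ker (g : Module.End R M) (b : R) (m : ℕ) (W : R[X])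
    (hco : IsCoprime (X - C b : R[X]) W)
    (h0 : aeval g ((X - C b) ^ m * W) = 0) :
    Module.End.maxGenEigenspace g b = LinearMap.ker (aeval g ((X - C b) ^ m)) := by
  apply le_antisymm
  · intro x hx
    obtain ⟨k, hk⟩ := (Module.End.mem_maxGenEigenspace g b x).1 hx
    have hk' : aeval g ((X - C b) ^ k) x = 0 := by rw [aux_aeval_X_sub_C_pow]; exact hk
    set y := aeval g ((X - C b) ^ m) x with hy
    have hy1 : aeval g W y = 0 := by
      rw [hy, ← Module.End.mul_apply, ← map_mul, mul_comm W ((X - C b) ^ m), h0,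
        LinearMap.zero_apply]
    have hy2 : aeval g ((X - C b) ^ k) y = 0 := by
      rw [hy, ← Module.End.mul_apply, ← map_mul, ← pow_add, add_comm k m, pow_add, map_mul,
        Module.End.mul_apply, hk', map_zero]
    have hdisj := Polynomial.disjoint_ker_aeval_of_isCoprime g
      (hco.pow_left : IsCoprime ((X - C b) ^ k) W)
    have : y ∈ LinearMap.ker (aeval g ((X - C b) ^ k)) ⊓ LinearMap.ker (aeval g W) :=
      ⟨LinearMap.mem_ker.2 hy2, LinearMap.mem_ker.2 hy1⟩
    rw [hdisj.eq_bot, Submodule.mem_bot] at this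
    exact LinearMap.mem_ker.2 this
  · intro x hx
    exact (Module.End.mem_maxGenEigenspace g b x).2
      ⟨m, by rw [← aux_aeval_X_sub_C_pow]; exact hx⟩

lemma aux_ker_aeval_prod (g : Module.End R M) {ι : Type*} [DecidableEq ι] (s : Finset ι)
    (p : ι → R[X]) (h : ∀ i ∈ s, ∀ j ∈ s, i ≠ j → IsCoprime (p i) (p j)) :
    LinearMap.ker (aeval g (∏ i ∈ s, p i)) = ⨆ i ∈ s, LinearMap.ker (aeval g (p i)) := by
  induction s using Finset.induction_on with
  | empty => simp [Module.End.one_eq_id, LinearMap.ker_id]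
  | @insert a s ha ih =>
    have hco : IsCoprime (p a) (∏ i ∈ s, p i) :=
      IsCoprime.prod_right fun i hi =>
        h a (Finset.mem_insert_self a s) i (Finset.mem_insert_of_mem hi)
          (fun he => ha (he ▸ hi))
    rw [Finset.prod_insert ha, ← Polynomial.sup_ker_aeval_eq_ker_aeval_mul_of_coprime g hco,
      ih (fun i hi j hj hij =>
        h i (Finset.mem_insert_of_mem hi) j (Finset.mem_insert_of_mem hj) hij)]
    exact (Finset.iSup_insert a s fun i => LinearMap.ker (aeval g (p i))).symm

lemma aux_field_ker_eq_iSup {F V ι : Type*} [Field F] [AddCommGroup V] [Module F V]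
    [Fintype ι] (g : Module.End F V) (c : ι → F) (α : ι → ℕ)
    (h0 : aeval g (∏ i, (X - C (c i)) ^ α i) = 0)
    (S : Finset ι) (hS : ∀ i ∈ S, ∀ j, c j = c i → j ∈ S) :
    LinearMap.ker (aeval g (∏ i ∈ S, (X - C (c i)) ^ α i))
      = ⨆ i ∈ S, Module.End.maxGenEigenspace g (c i) := by
  classical
  have hfib : ∀ (s : Finset ι) (b : F),
      (∏ j ∈ s.filter (fun j => c j = b), (X - C (c j)) ^ α j)
        = (X - C b) ^ (∑ j ∈ s.filter (fun j => c j = b), α j) := by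
    intro s b
    rw [Finset.prod_congr rfl (fun j hj => by rw [(Finset.mem_filter.1 hj).2]),
      Finset.prod_pow_eq_pow_sum]
  have hmax : ∀ i ∈ S, Module.End.maxGenEigenspace g (c i)
      ≤ LinearMap.ker (aeval g (∏ j ∈ S, (X - C (c j)) ^ α j)) := by
    intro i hi
    set m : ℕ := ∑ j ∈ Finset.univ.filter (fun j => c j = c i), α j with hm
    set W : F[X] := ∏ j ∈ Finset.univ.filter (fun j => ¬ c j = c i), (X - C (c j)) ^ α j with hW
    have hP : (∏ j, (X - C (c j)) ^ α j) = (X - C (c i)) ^ m * W := by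
      rw [← Finset.prod_filter_mul_prod_filter_not Finset.univ (fun j => c j = c i), hfib]
    have hcoW : IsCoprime (X - C (c i) : F[X]) W := by
      apply IsCoprime.prod_right
      intro j hj
      have hne : c j ≠ c i := by simpa using (Finset.mem_filter.1 hj).2
      exact (aux_coprime_X_sub_C (isUnit_iff_ne_zero.2 (sub_ne_zero.2 (Ne.symm hne)))).pow_right
    rw [aux_maxGen_eq_ker g (c i) m W hcoW (by rw [← hP]; exact h0)]
    have hfil : S.filter (fun j => c j = c i) = Finset.univ.filter (fun j => c j = c i) := by
      ext j
      simp only [Finset.mem_filter, Finset.mem_univ, true_and]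
      exact ⟨fun h => h.2, fun h => ⟨hS i hi j h, h⟩⟩
    have hQ : (∏ j ∈ S, (X - C (c j)) ^ α j)
        = (X - C (c i)) ^ m * ∏ j ∈ S.filter (fun j => ¬ c j = c i), (X - C (c j)) ^ α j := by
      rw [← Finset.prod_filter_mul_prod_filter_not S (fun j => c j = c i), hfil,
        hfib Finset.univ]
    rw [hQ]
    exact aux_ker_dvd g _ _
  apply le_antisymm
  · have himg : (∏ j ∈ S, (X - C (c j)) ^ α j)
        = ∏ b ∈ S.image c, ∏ j ∈ S.filter (fun j => c j = b), (X - C (c j)) ^ α j :=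
      (Finset.prod_fiberwise_of_maps_to (fun j hj => Finset.mem_image_of_mem c hj) _).symm
    rw [himg, Finset.prod_congr rfl (fun b _ => hfib S b), aux_ker_aeval_prod]
    · refine iSup₂_le fun b hb => ?_
      obtain ⟨i, hi, rfl⟩ := Finset.mem_image.1 hb
      refine le_trans ?_ (le_iSup₂ (f := fun i _ => Module.End.maxGenEigenspace g (c i)) i hi)
      intro x hx
      exact (Module.End.mem_maxGenEigenspace g (c i) x).2
        ⟨_, by rw [← aux_aeval_X_sub_C_pow]; exact LinearMap.mem_ker.1 hx⟩
    · intro b hb b' hb' hne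
      exact (aux_coprime_X_sub_C (isUnit_iff_ne_zero.2 (sub_ne_zero.2 hne))).pow
  · exact iSup₂_le hmax

end Helpers

open TensorProduct

/-- Scalar extension of generalized `(λ)`-eigenspaces: over the fraction field
`K` one recovers the sum of the generalized eigenspaces for the eigenvalues
congruent to `λ`, and over the residue field one recovers the generalized
`λ̄`-eigenspace. -/
theorem generalized_eigenspace_base_change
    (Λ : Type*) [CommRing Λ] [IsDomain Λ] [IsDiscreteValuationRing Λ]
    [IsAdicComplete (maximalIdeal Λ) Λ] [DecidableEq (ResidueField Λ)]
    (K : Type*) [Field K] [Algebra Λ K] [IsFractionRing Λ K]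
    (M : Type*) [AddCommGroup M] [Module Λ M] [Module.Finite Λ M]
    (f : Module.End Λ M)
    (nn : ℕ) (lam : Fin nn → Λ) (α : Fin nn → ℕ) (hα : ∀ i, 0 < α i)
    (P : Polynomial Λ) (hP : P = ∏ i, (X - C (lam i)) ^ α i)
    (hann : aeval f P = 0) (lam0 : Λ) :
    (Submodule.baseChange K
        (LinearMap.ker (aeval f
          (∏ i ∈ Finset.filter (fun i => residue Λ (lam i) = residue Λ lam0) Finset.univ,
            (X - C (lam i)) ^ α i))) =
      ⨆ i ∈ Finset.filter (fun i => residue Λ (lam i) = residue Λ lam0) Finset.univ,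
        Module.End.maxGenEigenspace
          (LinearMap.baseChange K (f : M →ₗ[Λ] M)) (algebraMap Λ K (lam i))) ∧
    (Submodule.baseChange (ResidueField Λ)
        (LinearMap.ker (aeval f
          (∏ i ∈ Finset.filter (fun i => residue Λ (lam i) = residue Λ lam0) Finset.univ,
            (X - C (lam i)) ^ α i))) =
      Module.End.maxGenEigenspace
        (LinearMap.baseChange (ResidueField Λ) (f : M →ₗ[Λ] M)) (residue Λ lam0)) := by
  set S : Finset (Fin nn) :=
    Finset.filter (fun i => residue Λ (lam i) = residue Λ lam0) Finset.univ with hS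
  set Q : Polynomial Λ := ∏ i ∈ S, (X - C (lam i)) ^ α i with hQ
  set Rq : Polynomial Λ :=
    ∏ i ∈ Finset.filter (fun i => ¬ residue Λ (lam i) = residue Λ lam0) Finset.univ,
      (X - C (lam i)) ^ α i with hRq
  have hunit : ∀ i j : Fin nn, residue Λ (lam i) ≠ residue Λ (lam j) →
      IsUnit (lam i - lam j) := by
    intro i j hij
    by_contra h
    have h1 : lam i - lam j ∈ maximalIdeal Λ :=
      (IsLocalRing.mem_maximalIdeal _).2 (mem_nonunits_iff.2 h)
    have h2 : residue Λ (lam i - lam j) = 0 := Ideal.Quotient.eq_zero_iff_mem.2 h1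
    rw [map_sub, sub_eq_zero] at h2
    exact hij h2
  have hsplit : P = Q * Rq := by
    rw [hQ, hRq, hS, hP]
    exact (Finset.prod_filter_mul_prod_filter_not Finset.univ _ _).symm
  have hcop : IsCoprime Q Rq := by
    rw [hQ, hRq]
    apply IsCoprime.prod_left
    intro i hi
    apply IsCoprime.prod_right
    intro j hj
    have h1 : residue Λ (lam i) = residue Λ lam0 := by
      have := (Finset.mem_filter.1 (hS ▸ hi)).2
      exact this
    have h2 : ¬ residue Λ (lam j) = residue Λ lam0 := (Finset.mem_filter.1 hj).2
    exact (aux_coprime_X_sub_C (hunit i j fun he => h2 (he.symm.trans h1))).pow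
  have hann0 : aeval f (Q * Rq) = 0 := by rw [← hsplit]; exact hann
  constructor
  · -- fraction field part
    have hbcK := aux_baseChange_ker_of_coprime (A := K) f Q Rq hcop hann0
    have hQmap : Q.map (algebraMap Λ K)
        = ∏ i ∈ S, (X - C (algebraMap Λ K (lam i))) ^ α i := by
      rw [hQ, Polynomial.map_prod]
      exact Finset.prod_congr rfl fun i _ => by
        rw [Polynomial.map_pow, Polynomial.map_sub, Polynomial.map_X, Polynomial.map_C]
    have hannK : aeval (LinearMap.baseChange K (f : M →ₗ[Λ] M) : Module.End K (K ⊗[Λ] M))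
        (∏ i, (X - C (algebraMap Λ K (lam i))) ^ α i) = 0 := by
      have hPm : (∏ i, (X - C (algebraMap Λ K (lam i))) ^ α i)
          = P.map (algebraMap Λ K) := by
        rw [hP, Polynomial.map_prod]
        exact (Finset.prod_congr rfl fun i _ => by
          rw [Polynomial.map_pow, Polynomial.map_sub, Polynomial.map_X, Polynomial.map_C]).symm
      rw [hPm, aux_aeval_baseChange, hann]
      ext x
      simp
    have hsat : ∀ i ∈ S, ∀ j, algebraMap Λ K (lam j) = algebraMap Λ K (lam i) → j ∈ S := by
      intro i hi j hij
      have hji : lam j = lam i := IsFractionRing.injective Λ K hij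
      have hi' : i ∈ Finset.filter (fun i => residue Λ (lam i) = residue Λ lam0) Finset.univ :=
        hS ▸ hi
      have h1 : residue Λ (lam i) = residue Λ lam0 := (Finset.mem_filter.1 hi').2
      rw [hS]
      exact Finset.mem_filter.2 ⟨Finset.mem_univ j, by rw [hji]; exact h1⟩
    calc Submodule.baseChange K (LinearMap.ker (aeval f Q))
        = LinearMap.ker (aeval
            (LinearMap.baseChange K (f : M →ₗ[Λ] M) : Module.End K (K ⊗[Λ] M))
            (Q.map (algebraMap Λ K))) := hbcK
      _ = LinearMap.ker (aeval
            (LinearMap.baseChange K (f : M →ₗ[Λ] M) : Module.End K (K ⊗[Λ] M))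
            (∏ i ∈ S, (X - C (algebraMap Λ K (lam i))) ^ α i)) := by rw [hQmap]
      _ = ⨆ i ∈ S, Module.End.maxGenEigenspace
            (LinearMap.baseChange K (f : M →ₗ[Λ] M)) (algebraMap Λ K (lam i)) :=
        aux_field_ker_eq_iSup _ _ α hannK S hsat
  · -- residue field part
    have hbck := aux_baseChange_ker_of_coprime (A := ResidueField Λ) f Q Rq hcop hann0
    have halg : algebraMap Λ (ResidueField Λ) = residue Λ := rfl
    have hQmap : Q.map (algebraMap Λ (ResidueField Λ))
        = (X - C (residue Λ lam0)) ^ (∑ i ∈ S, α i) := by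
      rw [hQ, Polynomial.map_prod,
        Finset.prod_congr rfl (fun i hi => ?_), Finset.prod_pow_eq_pow_sum]
      have hi' : i ∈ Finset.filter (fun i => residue Λ (lam i) = residue Λ lam0) Finset.univ :=
        hS ▸ hi
      have h1 : residue Λ (lam i) = residue Λ lam0 := (Finset.mem_filter.1 hi').2
      rw [Polynomial.map_pow, Polynomial.map_sub, Polynomial.map_X, Polynomial.map_C, halg, h1]
    have hcoW : IsCoprime (X - C (residue Λ lam0) : (ResidueField Λ)[X])
        (Rq.map (algebraMap Λ (ResidueField Λ))) := by
      rw [hRq, Polynomial.map_prod]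
      apply IsCoprime.prod_right
      intro j hj
      have h2 : ¬ residue Λ (lam j) = residue Λ lam0 := (Finset.mem_filter.1 hj).2
      rw [Polynomial.map_pow, Polynomial.map_sub, Polynomial.map_X, Polynomial.map_C, halg]
      exact (aux_coprime_X_sub_C (isUnit_iff_ne_zero.2
        (sub_ne_zero.2 fun he => h2 he.symm))).pow_right
    have h0 : aeval
        (LinearMap.baseChange (ResidueField Λ) (f : M →ₗ[Λ] M)
          : Module.End (ResidueField Λ) ((ResidueField Λ) ⊗[Λ] M))
        ((X - C (residue Λ lam0)) ^ (∑ i ∈ S, α i)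
          * Rq.map (algebraMap Λ (ResidueField Λ))) = 0 := by
      rw [← hQmap, ← Polynomial.map_mul, aux_aeval_baseChange, hann0]
      ext x
      simp
    calc Submodule.baseChange (ResidueField Λ) (LinearMap.ker (aeval f Q))
        = LinearMap.ker (aeval
            (LinearMap.baseChange (ResidueField Λ) (f : M →ₗ[Λ] M)
              : Module.End (ResidueField Λ) ((ResidueField Λ) ⊗[Λ] M))
            (Q.map (algebraMap Λ (ResidueField Λ)))) := hbck
      _ = LinearMap.ker (aeval
            (LinearMap.baseChange (ResidueField Λ) (f : M →ₗ[Λ] M)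
              : Module.End (ResidueField Λ) ((ResidueField Λ) ⊗[Λ] M))
            ((X - C (residue Λ lam0)) ^ (∑ i ∈ S, α i))) := by rw [hQmap]
      _ = Module.End.maxGenEigenspace
            (LinearMap.baseChange (ResidueField Λ) (f : M →ₗ[Λ] M)) (residue Λ lam0) :=
        (aux_maxGen_eq_ker _ _ _ _ hcoW h0).symm
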